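/- Let α₁, …, α₅ ∈ ℂ. There exist polynomials P₁, P₂, P₃ ∈ ℂ[X, Y, Z] (depending only on α₁,…,α₅) such that for every solution (x, y, z) of the modified reduced three-wave interaction system (2) on a connected open set U ⊆ ℂ with x nonvanishing, the functions x₃ = 1/x, y₃ = −((y − α₅)x − √−1(α₂−α₄)/2)x, z₃ = z + x² + √−1(α₁−α₃)x satisfy dx₃/dt = P₁(x₃, y₃, z₃), dy₃/dt = P₂(x₃, y₃, z₃), dz₃/dt = P₃(x₃, y₃, z₃) on U. -/

import Mathlib

open Complex

noncomputable section

/-- A solution of the modified reduced three-wave interaction dynamical system (2)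
on a set `U ⊆ ℂ`, with parameters `α₁, …, α₅ : ℂ`. -/
def solMTWI (α₁ α₂ α₃ α₄ α₅ : ℂ) (x y z : ℂ → ℂ) (U : Set ℂ) : Prop :=
  ∀ t ∈ U,
    HasDerivAt x
      (-2 * (y t) ^ 2 - (α₁ + α₃ - 2 * α₅) * y t + z t
        + (α₂ + α₄ + 2 * (α₁ + α₃) * α₅) / 2) t ∧
    HasDerivAt y
      (2 * x t * y t - 2 * α₅ * x t + I * (α₁ - α₃) * y t
        - I * (α₂ - α₄ + 2 * (α₁ - α₃) * α₅) / 2) t ∧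
    HasDerivAt z
      (-2 * x t * z t - (α₂ + α₄) * x t + I * (α₂ - α₄) * y t
        - I * (α₁ - α₃) * z t + I * (α₂ * α₃ - α₁ * α₄)) t
namespace TWIaux

open MvPolynomial

noncomputable def qA (α₁ α₂ α₃ α₄ α₅ : ℂ) : MvPolynomial (Fin 3) ℂ :=
  C (-(α₁ + α₃ + 2*α₅) * (I*(α₂-α₄)/2))
  + (C (-2*(I*(α₂-α₄)/2)^2) + C (α₁ + α₃ + 2*α₅) * X 1) * X 0
  + C (4*(I*(α₂-α₄)/2)) * X 1 * X 0^2
  - C 2 * X 1^2 * X 0^3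

noncomputable def P1A (α₁ α₂ α₃ α₄ α₅ : ℂ) : MvPolynomial (Fin 3) ℂ :=
  C (-(α₂+α₄)/2) * X 0^2 - X 0^3 * qA α₁ α₂ α₃ α₄ α₅ - X 0^2 * X 2 + 1
  + C (I*(α₁-α₃)) * X 0

noncomputable def P2A (α₁ α₂ α₃ α₄ α₅ : ℂ) : MvPolynomial (Fin 3) ℂ :=
  C (-(I*(α₁-α₃))) * X 1 - C (I*(α₂-α₄)/2) * X 2 - C ((I*(α₂-α₄)/2)*(α₂+α₄)/2)
  - C (I*(α₂-α₄)/2) * X 0 * qA α₁ α₂ α₃ α₄ α₅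
  + C 2 * X 1 * X 0 * X 2 + C (α₂+α₄) * X 1 * X 0
  + C 2 * X 1 * X 0^2 * qA α₁ α₂ α₃ α₄ α₅

noncomputable def P3A (α₁ α₂ α₃ α₄ α₅ : ℂ) : MvPolynomial (Fin 3) ℂ :=
  C (2*(I*(α₂-α₄)/2)) * (C α₅ + C (I*(α₂-α₄)/2) * X 0 - X 1 * X 0^2)
  + C (I*(α₂*α₃-α₁*α₄) + (I*(α₁-α₃))*(α₂+α₄)/2)
  + (C (I*(α₁-α₃)) * X 0 + C 2) * qA α₁ α₂ α₃ α₄ α₅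

end TWIaux

set_option maxHeartbeats 4000000 in
theorem stmt14 (α₁ α₂ α₃ α₄ α₅ : ℂ) :
    ∃ P₁ P₂ P₃ : MvPolynomial (Fin 3) ℂ,
      ∀ (U : Set ℂ), IsOpen U → IsConnected U →
      ∀ x y z : ℂ → ℂ, solMTWI α₁ α₂ α₃ α₄ α₅ x y z U → (∀ t ∈ U, x t ≠ 0) →
      ∀ t ∈ U,
        HasDerivAt (fun s => 1 / x s)
          (MvPolynomial.eval ![1 / x t, -((y t - α₅) * x t - I * (α₂ - α₄) / 2) * x t, z t + (x t) ^ 2 + I * (α₁ - α₃) * x t] P₁) t ∧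
        HasDerivAt (fun s => -((y s - α₅) * x s - I * (α₂ - α₄) / 2) * x s)
          (MvPolynomial.eval ![1 / x t, -((y t - α₅) * x t - I * (α₂ - α₄) / 2) * x t, z t + (x t) ^ 2 + I * (α₁ - α₃) * x t] P₂) t ∧
        HasDerivAt (fun s => z s + (x s) ^ 2 + I * (α₁ - α₃) * x s)
          (MvPolynomial.eval ![1 / x t, -((y t - α₅) * x t - I * (α₂ - α₄) / 2) * x t, z t + (x t) ^ 2 + I * (α₁ - α₃) * x t] P₃) t := by
  refine ⟨TWIaux.P1A α₁ α₂ α₃ α₄ α₅, TWIaux.P2A α₁ α₂ α₃ α₄ α₅, TWIaux.P3A α₁ α₂ α₃ α₄ α₅,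
    fun U _ _ x y z hsol hx0 t ht => ?_⟩
  obtain ⟨hx, hy, hz⟩ := hsol t ht
  have ha : x t ≠ 0 := hx0 t ht
  refine ⟨?_, ?_, ?_⟩
  · have H := (hasDerivAt_const t (1:ℂ)).div hx ha
    convert H using 1
    iterate 3 rfl
    simp only [TWIaux.P1A, TWIaux.P2A, TWIaux.P3A, TWIaux.qA, map_add, map_sub, map_mul,
      map_pow, map_one, MvPolynomial.eval_C, MvPolynomial.eval_X, Matrix.cons_val_zero,
      Matrix.cons_val_one, Matrix.head_cons, Matrix.cons_val_two, Matrix.tail_cons]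
    set u := 1 / x t with hu
    have hxu : x t * u = 1 := by rw [hu, mul_one_div, div_self ha]
    rw [eq_div_iff (pow_ne_zero 2 ha)]
    linear_combination ((-1/2 : ℂ) * (α₄) +
      (-1 : ℂ) * (α₃) * (α₅) +
      (-1/2 : ℂ) * (α₂) +
      (-1 : ℂ) * (α₁) * (α₅) +
      (-1 : ℂ) * (z t) +
      (-2 : ℂ) * (y t) * (α₅) +
      (1 : ℂ) * (y t) * (α₃) +
      (1 : ℂ) * (y t) * (α₁) +
      (2 : ℂ) * (y t) ^ 2 +
      (-1/2 : ℂ) * (x t) * (u) * (α₄) +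
      (-1 : ℂ) * (x t) * (u) * (α₃) * (α₅) +
      (-1/2 : ℂ) * (x t) * (u) * (α₂) +
      (-1 : ℂ) * (x t) * (u) * (α₁) * (α₅) +
      (-1 : ℂ) * (x t) * (u) * (z t) +
      (-2 : ℂ) * (x t) * (u) * (y t) * (α₅) +
      (1 : ℂ) * (x t) * (u) * (y t) * (α₃) +
      (1 : ℂ) * (x t) * (u) * (y t) * (α₁) +
      (2 : ℂ) * (x t) * (u) * (y t) ^ 2 +
      (-1 : ℂ) * (x t) ^ 2 +
      (1 : ℂ) * (x t) ^ 2 * (u) * (I) * (α₃) +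
      (-1 : ℂ) * (x t) ^ 2 * (u) * (I) * (α₁) +
      (-1 : ℂ) * (x t) ^ 2 * (u) ^ 2 * (α₃) * (α₅) +
      (-1 : ℂ) * (x t) ^ 2 * (u) ^ 2 * (α₁) * (α₅) +
      (-2 : ℂ) * (x t) ^ 2 * (u) ^ 2 * (y t) * (α₅) +
      (1 : ℂ) * (x t) ^ 2 * (u) ^ 2 * (y t) * (α₃) +
      (1 : ℂ) * (x t) ^ 2 * (u) ^ 2 * (y t) * (α₁) +
      (2 : ℂ) * (x t) ^ 2 * (u) ^ 2 * (y t) ^ 2 +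
      (1 : ℂ) * (x t) ^ 2 * (u) ^ 3 * (I) * (α₄) * (α₅) +
      (1/2 : ℂ) * (x t) ^ 2 * (u) ^ 3 * (I) * (α₃) * (α₄) +
      (-1 : ℂ) * (x t) ^ 2 * (u) ^ 3 * (I) * (α₂) * (α₅) +
      (-1/2 : ℂ) * (x t) ^ 2 * (u) ^ 3 * (I) * (α₂) * (α₃) +
      (1/2 : ℂ) * (x t) ^ 2 * (u) ^ 3 * (I) * (α₁) * (α₄) +
      (-1/2 : ℂ) * (x t) ^ 2 * (u) ^ 3 * (I) * (α₁) * (α₂) +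
      (-1/2 : ℂ) * (x t) ^ 2 * (u) ^ 4 * (I) ^ 2 * (α₄) ^ 2 +
      (1 : ℂ) * (x t) ^ 2 * (u) ^ 4 * (I) ^ 2 * (α₂) * (α₄) +
      (-1/2 : ℂ) * (x t) ^ 2 * (u) ^ 4 * (I) ^ 2 * (α₂) ^ 2 +
      (-1 : ℂ) * (x t) ^ 3 * (u) +
      (-1 : ℂ) * (x t) ^ 3 * (u) ^ 3 * (α₃) * (α₅) +
      (-1 : ℂ) * (x t) ^ 3 * (u) ^ 3 * (α₁) * (α₅) +
      (-2 : ℂ) * (x t) ^ 3 * (u) ^ 3 * (y t) * (α₅) +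
      (1 : ℂ) * (x t) ^ 3 * (u) ^ 3 * (y t) * (α₃) +
      (1 : ℂ) * (x t) ^ 3 * (u) ^ 3 * (y t) * (α₁) +
      (2 : ℂ) * (x t) ^ 3 * (u) ^ 3 * (y t) ^ 2 +
      (1/2 : ℂ) * (x t) ^ 3 * (u) ^ 5 * (I) ^ 2 * (α₄) ^ 2 +
      (-1 : ℂ) * (x t) ^ 3 * (u) ^ 5 * (I) ^ 2 * (α₂) * (α₄) +
      (1/2 : ℂ) * (x t) ^ 3 * (u) ^ 5 * (I) ^ 2 * (α₂) ^ 2 +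
      (2 : ℂ) * (x t) ^ 4 * (u) ^ 4 * (α₅) ^ 2 +
      (-4 : ℂ) * (x t) ^ 4 * (u) ^ 4 * (y t) * (α₅) +
      (2 : ℂ) * (x t) ^ 4 * (u) ^ 4 * (y t) ^ 2 +
      (-2 : ℂ) * (x t) ^ 4 * (u) ^ 5 * (I) * (α₄) * (α₅) +
      (2 : ℂ) * (x t) ^ 4 * (u) ^ 5 * (I) * (α₂) * (α₅) +
      (2 : ℂ) * (x t) ^ 4 * (u) ^ 5 * (y t) * (I) * (α₄) +
      (-2 : ℂ) * (x t) ^ 4 * (u) ^ 5 * (y t) * (I) * (α₂) +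
      (2 : ℂ) * (x t) ^ 5 * (u) ^ 5 * (α₅) ^ 2 +
      (-4 : ℂ) * (x t) ^ 5 * (u) ^ 5 * (y t) * (α₅) +
      (2 : ℂ) * (x t) ^ 5 * (u) ^ 5 * (y t) ^ 2) * hxu
  · have H := (((hy.sub_const α₅).mul hx).sub_const (I * (α₂ - α₄) / 2)).neg.mul hx
    convert H using 1
    iterate 3 rfl
    simp only [TWIaux.P1A, TWIaux.P2A, TWIaux.P3A, TWIaux.qA, map_add, map_sub, map_mul,
      map_pow, map_one, MvPolynomial.eval_C, MvPolynomial.eval_X, Matrix.cons_val_zero,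
      Matrix.cons_val_one, Matrix.head_cons, Matrix.cons_val_two, Matrix.tail_cons, Pi.neg_apply, Pi.mul_apply]
    set u := 1 / x t with hu
    have hxu : x t * u = 1 := by rw [hu, mul_one_div, div_self ha]
    linear_combination ((-1/2 : ℂ) * (I) * (α₄) ^ 2 +
      (-1/2 : ℂ) * (I) * (α₃) * (α₄) * (α₅) +
      (1/2 : ℂ) * (I) * (α₂) * (α₃) * (α₅) +
      (1/2 : ℂ) * (I) * (α₂) ^ 2 +
      (-1/2 : ℂ) * (I) * (α₁) * (α₄) * (α₅) +
      (1/2 : ℂ) * (I) * (α₁) * (α₂) * (α₅) +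
      (-1 : ℂ) * (z t) * (I) * (α₄) +
      (1 : ℂ) * (z t) * (I) * (α₂) +
      (-1 : ℂ) * (y t) * (I) * (α₄) * (α₅) +
      (1/2 : ℂ) * (y t) * (I) * (α₃) * (α₄) +
      (1 : ℂ) * (y t) * (I) * (α₂) * (α₅) +
      (-1/2 : ℂ) * (y t) * (I) * (α₂) * (α₃) +
      (1/2 : ℂ) * (y t) * (I) * (α₁) * (α₄) +
      (-1/2 : ℂ) * (y t) * (I) * (α₁) * (α₂) +
      (1 : ℂ) * (y t) ^ 2 * (I) * (α₄) +
      (-1 : ℂ) * (y t) ^ 2 * (I) * (α₂) +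
      (-1/2 : ℂ) * (u) * (I) ^ 2 * (α₄) ^ 2 * (α₅) +
      (-1/4 : ℂ) * (u) * (I) ^ 2 * (α₃) * (α₄) ^ 2 +
      (1 : ℂ) * (u) * (I) ^ 2 * (α₂) * (α₄) * (α₅) +
      (1/2 : ℂ) * (u) * (I) ^ 2 * (α₂) * (α₃) * (α₄) +
      (-1/2 : ℂ) * (u) * (I) ^ 2 * (α₂) ^ 2 * (α₅) +
      (-1/4 : ℂ) * (u) * (I) ^ 2 * (α₂) ^ 2 * (α₃) +
      (-1/4 : ℂ) * (u) * (I) ^ 2 * (α₁) * (α₄) ^ 2 +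
      (1/2 : ℂ) * (u) * (I) ^ 2 * (α₁) * (α₂) * (α₄) +
      (-1/4 : ℂ) * (u) * (I) ^ 2 * (α₁) * (α₂) ^ 2 +
      (1/4 : ℂ) * (u) ^ 2 * (I) ^ 3 * (α₄) ^ 3 +
      (-3/4 : ℂ) * (u) ^ 2 * (I) ^ 3 * (α₂) * (α₄) ^ 2 +
      (3/4 : ℂ) * (u) ^ 2 * (I) ^ 3 * (α₂) ^ 2 * (α₄) +
      (-1/4 : ℂ) * (u) ^ 2 * (I) ^ 3 * (α₂) ^ 3 +
      (1 : ℂ) * (x t) * (α₄) * (α₅) +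
      (2 : ℂ) * (x t) * (α₃) * (α₅) ^ 2 +
      (1 : ℂ) * (x t) * (α₂) * (α₅) +
      (2 : ℂ) * (x t) * (α₁) * (α₅) ^ 2 +
      (1 : ℂ) * (x t) * (I) ^ 2 * (α₃) * (α₄) +
      (-1 : ℂ) * (x t) * (I) ^ 2 * (α₂) * (α₃) +
      (-1 : ℂ) * (x t) * (I) ^ 2 * (α₁) * (α₄) +
      (1 : ℂ) * (x t) * (I) ^ 2 * (α₁) * (α₂) +
      (2 : ℂ) * (x t) * (z t) * (α₅) +
      (4 : ℂ) * (x t) * (y t) * (α₅) ^ 2 +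
      (-1 : ℂ) * (x t) * (y t) * (α₄) +
      (-4 : ℂ) * (x t) * (y t) * (α₃) * (α₅) +
      (-1 : ℂ) * (x t) * (y t) * (α₂) +
      (-4 : ℂ) * (x t) * (y t) * (α₁) * (α₅) +
      (-2 : ℂ) * (x t) * (y t) * (z t) +
      (-8 : ℂ) * (x t) * (y t) ^ 2 * (α₅) +
      (2 : ℂ) * (x t) * (y t) ^ 2 * (α₃) +
      (2 : ℂ) * (x t) * (y t) ^ 2 * (α₁) +
      (4 : ℂ) * (x t) * (y t) ^ 3 +
      (-1/2 : ℂ) * (x t) * (u) * (I) * (α₃) * (α₄) * (α₅) +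
      (1/2 : ℂ) * (x t) * (u) * (I) * (α₂) * (α₃) * (α₅) +
      (-1/2 : ℂ) * (x t) * (u) * (I) * (α₁) * (α₄) * (α₅) +
      (1/2 : ℂ) * (x t) * (u) * (I) * (α₁) * (α₂) * (α₅) +
      (-1 : ℂ) * (x t) * (u) * (y t) * (I) * (α₄) * (α₅) +
      (1/2 : ℂ) * (x t) * (u) * (y t) * (I) * (α₃) * (α₄) +
      (1 : ℂ) * (x t) * (u) * (y t) * (I) * (α₂) * (α₅) +
      (-1/2 : ℂ) * (x t) * (u) * (y t) * (I) * (α₂) * (α₃) +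
      (1/2 : ℂ) * (x t) * (u) * (y t) * (I) * (α₁) * (α₄) +
      (-1/2 : ℂ) * (x t) * (u) * (y t) * (I) * (α₁) * (α₂) +
      (1 : ℂ) * (x t) * (u) * (y t) ^ 2 * (I) * (α₄) +
      (-1 : ℂ) * (x t) * (u) * (y t) ^ 2 * (I) * (α₂) +
      (1 : ℂ) * (x t) * (u) ^ 2 * (I) ^ 2 * (α₄) ^ 2 * (α₅) +
      (1/2 : ℂ) * (x t) * (u) ^ 2 * (I) ^ 2 * (α₃) * (α₄) ^ 2 +
      (-2 : ℂ) * (x t) * (u) ^ 2 * (I) ^ 2 * (α₂) * (α₄) * (α₅) +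
      (-1 : ℂ) * (x t) * (u) ^ 2 * (I) ^ 2 * (α₂) * (α₃) * (α₄) +
      (1 : ℂ) * (x t) * (u) ^ 2 * (I) ^ 2 * (α₂) ^ 2 * (α₅) +
      (1/2 : ℂ) * (x t) * (u) ^ 2 * (I) ^ 2 * (α₂) ^ 2 * (α₃) +
      (1/2 : ℂ) * (x t) * (u) ^ 2 * (I) ^ 2 * (α₁) * (α₄) ^ 2 +
      (-1 : ℂ) * (x t) * (u) ^ 2 * (I) ^ 2 * (α₁) * (α₂) * (α₄) +
      (1/2 : ℂ) * (x t) * (u) ^ 2 * (I) ^ 2 * (α₁) * (α₂) ^ 2 +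
      (-3/4 : ℂ) * (x t) * (u) ^ 3 * (I) ^ 3 * (α₄) ^ 3 +
      (9/4 : ℂ) * (x t) * (u) ^ 3 * (I) ^ 3 * (α₂) * (α₄) ^ 2 +
      (-9/4 : ℂ) * (x t) * (u) ^ 3 * (I) ^ 3 * (α₂) ^ 2 * (α₄) +
      (3/4 : ℂ) * (x t) * (u) ^ 3 * (I) ^ 3 * (α₂) ^ 3 +
      (-1 : ℂ) * (x t) ^ 2 * (I) * (α₄) +
      (-2 : ℂ) * (x t) ^ 2 * (I) * (α₃) * (α₅) +
      (1 : ℂ) * (x t) ^ 2 * (I) * (α₂) +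
      (2 : ℂ) * (x t) ^ 2 * (I) * (α₁) * (α₅) +
      (2 : ℂ) * (x t) ^ 2 * (y t) * (I) * (α₃) +
      (-2 : ℂ) * (x t) ^ 2 * (y t) * (I) * (α₁) +
      (2 : ℂ) * (x t) ^ 2 * (u) * (α₃) * (α₅) ^ 2 +
      (2 : ℂ) * (x t) ^ 2 * (u) * (α₁) * (α₅) ^ 2 +
      (4 : ℂ) * (x t) ^ 2 * (u) * (y t) * (α₅) ^ 2 +
      (-4 : ℂ) * (x t) ^ 2 * (u) * (y t) * (α₃) * (α₅) +
      (-4 : ℂ) * (x t) ^ 2 * (u) * (y t) * (α₁) * (α₅) +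
      (-8 : ℂ) * (x t) ^ 2 * (u) * (y t) ^ 2 * (α₅) +
      (2 : ℂ) * (x t) ^ 2 * (u) * (y t) ^ 2 * (α₃) +
      (2 : ℂ) * (x t) ^ 2 * (u) * (y t) ^ 2 * (α₁) +
      (4 : ℂ) * (x t) ^ 2 * (u) * (y t) ^ 3 +
      (-3 : ℂ) * (x t) ^ 2 * (u) ^ 2 * (I) * (α₄) * (α₅) ^ 2 +
      (-2 : ℂ) * (x t) ^ 2 * (u) ^ 2 * (I) * (α₃) * (α₄) * (α₅) +
      (3 : ℂ) * (x t) ^ 2 * (u) ^ 2 * (I) * (α₂) * (α₅) ^ 2 +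
      (2 : ℂ) * (x t) ^ 2 * (u) ^ 2 * (I) * (α₂) * (α₃) * (α₅) +
      (-2 : ℂ) * (x t) ^ 2 * (u) ^ 2 * (I) * (α₁) * (α₄) * (α₅) +
      (2 : ℂ) * (x t) ^ 2 * (u) ^ 2 * (I) * (α₁) * (α₂) * (α₅) +
      (2 : ℂ) * (x t) ^ 2 * (u) ^ 2 * (y t) * (I) * (α₄) * (α₅) +
      (2 : ℂ) * (x t) ^ 2 * (u) ^ 2 * (y t) * (I) * (α₃) * (α₄) +
      (-2 : ℂ) * (x t) ^ 2 * (u) ^ 2 * (y t) * (I) * (α₂) * (α₅) +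
      (-2 : ℂ) * (x t) ^ 2 * (u) ^ 2 * (y t) * (I) * (α₂) * (α₃) +
      (2 : ℂ) * (x t) ^ 2 * (u) ^ 2 * (y t) * (I) * (α₁) * (α₄) +
      (-2 : ℂ) * (x t) ^ 2 * (u) ^ 2 * (y t) * (I) * (α₁) * (α₂) +
      (1 : ℂ) * (x t) ^ 2 * (u) ^ 2 * (y t) ^ 2 * (I) * (α₄) +
      (-1 : ℂ) * (x t) ^ 2 * (u) ^ 2 * (y t) ^ 2 * (I) * (α₂) +
      (2 : ℂ) * (x t) ^ 2 * (u) ^ 3 * (I) ^ 2 * (α₄) ^ 2 * (α₅) +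
      (-4 : ℂ) * (x t) ^ 2 * (u) ^ 3 * (I) ^ 2 * (α₂) * (α₄) * (α₅) +
      (2 : ℂ) * (x t) ^ 2 * (u) ^ 3 * (I) ^ 2 * (α₂) ^ 2 * (α₅) +
      (-2 : ℂ) * (x t) ^ 2 * (u) ^ 3 * (y t) * (I) ^ 2 * (α₄) ^ 2 +
      (4 : ℂ) * (x t) ^ 2 * (u) ^ 3 * (y t) * (I) ^ 2 * (α₂) * (α₄) +
      (-2 : ℂ) * (x t) ^ 2 * (u) ^ 3 * (y t) * (I) ^ 2 * (α₂) ^ 2 +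
      (1/2 : ℂ) * (x t) ^ 2 * (u) ^ 4 * (I) ^ 3 * (α₄) ^ 3 +
      (-3/2 : ℂ) * (x t) ^ 2 * (u) ^ 4 * (I) ^ 3 * (α₂) * (α₄) ^ 2 +
      (3/2 : ℂ) * (x t) ^ 2 * (u) ^ 4 * (I) ^ 3 * (α₂) ^ 2 * (α₄) +
      (-1/2 : ℂ) * (x t) ^ 2 * (u) ^ 4 * (I) ^ 3 * (α₂) ^ 3 +
      (2 : ℂ) * (x t) ^ 3 * (α₅) +
      (-2 : ℂ) * (x t) ^ 3 * (y t) +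
      (2 : ℂ) * (x t) ^ 3 * (u) ^ 2 * (α₃) * (α₅) ^ 2 +
      (2 : ℂ) * (x t) ^ 3 * (u) ^ 2 * (α₁) * (α₅) ^ 2 +
      (4 : ℂ) * (x t) ^ 3 * (u) ^ 2 * (y t) * (α₅) ^ 2 +
      (-4 : ℂ) * (x t) ^ 3 * (u) ^ 2 * (y t) * (α₃) * (α₅) +
      (-4 : ℂ) * (x t) ^ 3 * (u) ^ 2 * (y t) * (α₁) * (α₅) +
      (-8 : ℂ) * (x t) ^ 3 * (u) ^ 2 * (y t) ^ 2 * (α₅) +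
      (2 : ℂ) * (x t) ^ 3 * (u) ^ 2 * (y t) ^ 2 * (α₃) +
      (2 : ℂ) * (x t) ^ 3 * (u) ^ 2 * (y t) ^ 2 * (α₁) +
      (4 : ℂ) * (x t) ^ 3 * (u) ^ 2 * (y t) ^ 3 +
      (1 : ℂ) * (x t) ^ 3 * (u) ^ 3 * (I) * (α₄) * (α₅) ^ 2 +
      (-1 : ℂ) * (x t) ^ 3 * (u) ^ 3 * (I) * (α₂) * (α₅) ^ 2 +
      (-2 : ℂ) * (x t) ^ 3 * (u) ^ 3 * (y t) * (I) * (α₄) * (α₅) +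
      (2 : ℂ) * (x t) ^ 3 * (u) ^ 3 * (y t) * (I) * (α₂) * (α₅) +
      (1 : ℂ) * (x t) ^ 3 * (u) ^ 3 * (y t) ^ 2 * (I) * (α₄) +
      (-1 : ℂ) * (x t) ^ 3 * (u) ^ 3 * (y t) ^ 2 * (I) * (α₂) +
      (-3 : ℂ) * (x t) ^ 3 * (u) ^ 4 * (I) ^ 2 * (α₄) ^ 2 * (α₅) +
      (6 : ℂ) * (x t) ^ 3 * (u) ^ 4 * (I) ^ 2 * (α₂) * (α₄) * (α₅) +
      (-3 : ℂ) * (x t) ^ 3 * (u) ^ 4 * (I) ^ 2 * (α₂) ^ 2 * (α₅) +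
      (3 : ℂ) * (x t) ^ 3 * (u) ^ 4 * (y t) * (I) ^ 2 * (α₄) ^ 2 +
      (-6 : ℂ) * (x t) ^ 3 * (u) ^ 4 * (y t) * (I) ^ 2 * (α₂) * (α₄) +
      (3 : ℂ) * (x t) ^ 3 * (u) ^ 4 * (y t) * (I) ^ 2 * (α₂) ^ 2 +
      (-4 : ℂ) * (x t) ^ 4 * (u) ^ 3 * (α₅) ^ 3 +
      (12 : ℂ) * (x t) ^ 4 * (u) ^ 3 * (y t) * (α₅) ^ 2 +
      (-12 : ℂ) * (x t) ^ 4 * (u) ^ 3 * (y t) ^ 2 * (α₅) +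
      (4 : ℂ) * (x t) ^ 4 * (u) ^ 3 * (y t) ^ 3 +
      (6 : ℂ) * (x t) ^ 4 * (u) ^ 4 * (I) * (α₄) * (α₅) ^ 2 +
      (-6 : ℂ) * (x t) ^ 4 * (u) ^ 4 * (I) * (α₂) * (α₅) ^ 2 +
      (-12 : ℂ) * (x t) ^ 4 * (u) ^ 4 * (y t) * (I) * (α₄) * (α₅) +
      (12 : ℂ) * (x t) ^ 4 * (u) ^ 4 * (y t) * (I) * (α₂) * (α₅) +
      (6 : ℂ) * (x t) ^ 4 * (u) ^ 4 * (y t) ^ 2 * (I) * (α₄) +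
      (-6 : ℂ) * (x t) ^ 4 * (u) ^ 4 * (y t) ^ 2 * (I) * (α₂) +
      (-4 : ℂ) * (x t) ^ 5 * (u) ^ 4 * (α₅) ^ 3 +
      (12 : ℂ) * (x t) ^ 5 * (u) ^ 4 * (y t) * (α₅) ^ 2 +
      (-12 : ℂ) * (x t) ^ 5 * (u) ^ 4 * (y t) ^ 2 * (α₅) +
      (4 : ℂ) * (x t) ^ 5 * (u) ^ 4 * (y t) ^ 3) * hxu
  · have H := (hz.add (hx.pow 2)).add (hx.const_mul (I * (α₁ - α₃)))
    convert H using 1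
    iterate 3 rfl
    simp only [TWIaux.P1A, TWIaux.P2A, TWIaux.P3A, TWIaux.qA, map_add, map_sub, map_mul,
      map_pow, map_one, MvPolynomial.eval_C, MvPolynomial.eval_X, Matrix.cons_val_zero,
      Matrix.cons_val_one, Matrix.head_cons, Matrix.cons_val_two, Matrix.tail_cons]
    set u := 1 / x t with hu
    have hxu : x t * u = 1 := by rw [hu, mul_one_div, div_self ha]
    linear_combination ((-1 : ℂ) * (I) * (α₄) * (α₅) +
      (-1 : ℂ) * (I) * (α₃) * (α₄) +
      (-1 : ℂ) * (I) * (α₃) ^ 2 * (α₅) +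
      (1 : ℂ) * (I) * (α₂) * (α₅) +
      (1 : ℂ) * (I) * (α₂) * (α₃) +
      (-1 : ℂ) * (I) * (α₁) * (α₄) +
      (1 : ℂ) * (I) * (α₁) * (α₂) +
      (1 : ℂ) * (I) * (α₁) ^ 2 * (α₅) +
      (-1 : ℂ) * (y t) * (I) * (α₄) +
      (-2 : ℂ) * (y t) * (I) * (α₃) * (α₅) +
      (1 : ℂ) * (y t) * (I) * (α₃) ^ 2 +
      (1 : ℂ) * (y t) * (I) * (α₂) +
      (2 : ℂ) * (y t) * (I) * (α₁) * (α₅) +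
      (-1 : ℂ) * (y t) * (I) * (α₁) ^ 2 +
      (2 : ℂ) * (y t) ^ 2 * (I) * (α₃) +
      (-2 : ℂ) * (y t) ^ 2 * (I) * (α₁) +
      (1/2 : ℂ) * (u) * (I) ^ 2 * (α₄) ^ 2 +
      (1 : ℂ) * (u) * (I) ^ 2 * (α₃) * (α₄) * (α₅) +
      (1/2 : ℂ) * (u) * (I) ^ 2 * (α₃) ^ 2 * (α₄) +
      (-1 : ℂ) * (u) * (I) ^ 2 * (α₂) * (α₄) +
      (-1 : ℂ) * (u) * (I) ^ 2 * (α₂) * (α₃) * (α₅) +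
      (-1/2 : ℂ) * (u) * (I) ^ 2 * (α₂) * (α₃) ^ 2 +
      (1/2 : ℂ) * (u) * (I) ^ 2 * (α₂) ^ 2 +
      (-1 : ℂ) * (u) * (I) ^ 2 * (α₁) * (α₄) * (α₅) +
      (1 : ℂ) * (u) * (I) ^ 2 * (α₁) * (α₂) * (α₅) +
      (-1/2 : ℂ) * (u) * (I) ^ 2 * (α₁) ^ 2 * (α₄) +
      (1/2 : ℂ) * (u) * (I) ^ 2 * (α₁) ^ 2 * (α₂) +
      (-1/2 : ℂ) * (u) ^ 2 * (I) ^ 3 * (α₃) * (α₄) ^ 2 +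
      (1 : ℂ) * (u) ^ 2 * (I) ^ 3 * (α₂) * (α₃) * (α₄) +
      (-1/2 : ℂ) * (u) ^ 2 * (I) ^ 3 * (α₂) ^ 2 * (α₃) +
      (1/2 : ℂ) * (u) ^ 2 * (I) ^ 3 * (α₁) * (α₄) ^ 2 +
      (-1 : ℂ) * (u) ^ 2 * (I) ^ 3 * (α₁) * (α₂) * (α₄) +
      (1/2 : ℂ) * (u) ^ 2 * (I) ^ 3 * (α₁) * (α₂) ^ 2 +
      (2 : ℂ) * (x t) * (α₃) * (α₅) +
      (2 : ℂ) * (x t) * (α₁) * (α₅) +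
      (4 : ℂ) * (x t) * (y t) * (α₅) +
      (-2 : ℂ) * (x t) * (y t) * (α₃) +
      (-2 : ℂ) * (x t) * (y t) * (α₁) +
      (-4 : ℂ) * (x t) * (y t) ^ 2 +
      (1 : ℂ) * (x t) * (u) * (I) * (α₄) * (α₅) +
      (-1 : ℂ) * (x t) * (u) * (I) * (α₃) ^ 2 * (α₅) +
      (-1 : ℂ) * (x t) * (u) * (I) * (α₂) * (α₅) +
      (1 : ℂ) * (x t) * (u) * (I) * (α₁) ^ 2 * (α₅) +
      (-1 : ℂ) * (x t) * (u) * (y t) * (I) * (α₄) +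
      (-2 : ℂ) * (x t) * (u) * (y t) * (I) * (α₃) * (α₅) +
      (1 : ℂ) * (x t) * (u) * (y t) * (I) * (α₃) ^ 2 +
      (1 : ℂ) * (x t) * (u) * (y t) * (I) * (α₂) +
      (2 : ℂ) * (x t) * (u) * (y t) * (I) * (α₁) * (α₅) +
      (-1 : ℂ) * (x t) * (u) * (y t) * (I) * (α₁) ^ 2 +
      (2 : ℂ) * (x t) * (u) * (y t) ^ 2 * (I) * (α₃) +
      (-2 : ℂ) * (x t) * (u) * (y t) ^ 2 * (I) * (α₁) +
      (-1 : ℂ) * (x t) * (u) ^ 2 * (I) ^ 2 * (α₄) ^ 2 +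
      (2 : ℂ) * (x t) * (u) ^ 2 * (I) ^ 2 * (α₂) * (α₄) +
      (-1 : ℂ) * (x t) * (u) ^ 2 * (I) ^ 2 * (α₂) ^ 2 +
      (1/2 : ℂ) * (x t) * (u) ^ 3 * (I) ^ 3 * (α₃) * (α₄) ^ 2 +
      (-1 : ℂ) * (x t) * (u) ^ 3 * (I) ^ 3 * (α₂) * (α₃) * (α₄) +
      (1/2 : ℂ) * (x t) * (u) ^ 3 * (I) ^ 3 * (α₂) ^ 2 * (α₃) +
      (-1/2 : ℂ) * (x t) * (u) ^ 3 * (I) ^ 3 * (α₁) * (α₄) ^ 2 +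
      (1 : ℂ) * (x t) * (u) ^ 3 * (I) ^ 3 * (α₁) * (α₂) * (α₄) +
      (-1/2 : ℂ) * (x t) * (u) ^ 3 * (I) ^ 3 * (α₁) * (α₂) ^ 2 +
      (-4 : ℂ) * (x t) ^ 2 * (u) * (α₅) ^ 2 +
      (8 : ℂ) * (x t) ^ 2 * (u) * (y t) * (α₅) +
      (-4 : ℂ) * (x t) ^ 2 * (u) * (y t) ^ 2 +
      (4 : ℂ) * (x t) ^ 2 * (u) ^ 2 * (I) * (α₄) * (α₅) +
      (2 : ℂ) * (x t) ^ 2 * (u) ^ 2 * (I) * (α₃) * (α₅) ^ 2 +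
      (-4 : ℂ) * (x t) ^ 2 * (u) ^ 2 * (I) * (α₂) * (α₅) +
      (-2 : ℂ) * (x t) ^ 2 * (u) ^ 2 * (I) * (α₁) * (α₅) ^ 2 +
      (-4 : ℂ) * (x t) ^ 2 * (u) ^ 2 * (y t) * (I) * (α₄) +
      (-4 : ℂ) * (x t) ^ 2 * (u) ^ 2 * (y t) * (I) * (α₃) * (α₅) +
      (4 : ℂ) * (x t) ^ 2 * (u) ^ 2 * (y t) * (I) * (α₂) +
      (4 : ℂ) * (x t) ^ 2 * (u) ^ 2 * (y t) * (I) * (α₁) * (α₅) +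
      (2 : ℂ) * (x t) ^ 2 * (u) ^ 2 * (y t) ^ 2 * (I) * (α₃) +
      (-2 : ℂ) * (x t) ^ 2 * (u) ^ 2 * (y t) ^ 2 * (I) * (α₁) +
      (-2 : ℂ) * (x t) ^ 2 * (u) ^ 3 * (I) ^ 2 * (α₃) * (α₄) * (α₅) +
      (2 : ℂ) * (x t) ^ 2 * (u) ^ 3 * (I) ^ 2 * (α₂) * (α₃) * (α₅) +
      (2 : ℂ) * (x t) ^ 2 * (u) ^ 3 * (I) ^ 2 * (α₁) * (α₄) * (α₅) +
      (-2 : ℂ) * (x t) ^ 2 * (u) ^ 3 * (I) ^ 2 * (α₁) * (α₂) * (α₅) +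
      (2 : ℂ) * (x t) ^ 2 * (u) ^ 3 * (y t) * (I) ^ 2 * (α₃) * (α₄) +
      (-2 : ℂ) * (x t) ^ 2 * (u) ^ 3 * (y t) * (I) ^ 2 * (α₂) * (α₃) +
      (-2 : ℂ) * (x t) ^ 2 * (u) ^ 3 * (y t) * (I) ^ 2 * (α₁) * (α₄) +
      (2 : ℂ) * (x t) ^ 2 * (u) ^ 3 * (y t) * (I) ^ 2 * (α₁) * (α₂) +
      (-4 : ℂ) * (x t) ^ 3 * (u) ^ 2 * (α₅) ^ 2 +
      (8 : ℂ) * (x t) ^ 3 * (u) ^ 2 * (y t) * (α₅) +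
      (-4 : ℂ) * (x t) ^ 3 * (u) ^ 2 * (y t) ^ 2 +
      (2 : ℂ) * (x t) ^ 3 * (u) ^ 3 * (I) * (α₃) * (α₅) ^ 2 +
      (-2 : ℂ) * (x t) ^ 3 * (u) ^ 3 * (I) * (α₁) * (α₅) ^ 2 +
      (-4 : ℂ) * (x t) ^ 3 * (u) ^ 3 * (y t) * (I) * (α₃) * (α₅) +
      (4 : ℂ) * (x t) ^ 3 * (u) ^ 3 * (y t) * (I) * (α₁) * (α₅) +
      (2 : ℂ) * (x t) ^ 3 * (u) ^ 3 * (y t) ^ 2 * (I) * (α₃) +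
      (-2 : ℂ) * (x t) ^ 3 * (u) ^ 3 * (y t) ^ 2 * (I) * (α₁)) * hxu
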